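/- Let Y be a complex 3×3 matrix with SVD Y = U_L · diag(y₁, y₂, y₃) · U_R†, 0 ≤ y₁ ≤ y₂ ≤ y₃, and suppose y₃² > 2y₂². Let α be an index of a longest row of Y (i.e. (Y Y†)_{αα} ≥ (Y Y†)_{jj} for all j). Then |U_{L,α3}|² ≥ (y₃² − 2y₂²)/(3(y₃² − y₂²)) = 1/(X+1), where X = (2y₃² − y₂²)/(y₃² − 2y₂²). -/
import Mathlib


open Matrix

lemma mul_star_eq_norm_sq (z : ℂ) : z * star z = ((‖z‖^2 : ℝ) : ℂ) := by
  exact_mod_cast Complex.mul_conj' z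

lemma star_mul_eq_norm_sq (z : ℂ) : star z * z = ((‖z‖^2 : ℝ) : ℂ) := by
  rw [mul_comm]; exact mul_star_eq_norm_sq z

/-- Lemma 1, first inequality: the longest row α of Y satisfies
`|U_{L,α3}|² ≥ (y₃² − 2y₂²)/(3(y₃² − y₂²)) = 1/(X+1)`. -/
theorem longest_row_third_component_lower_bound
    (Y U_L U_R : Matrix (Fin 3) (Fin 3) ℂ) (y : Fin 3 → ℝ) (α : Fin 3)
    (hUL : U_L ∈ Matrix.unitaryGroup (Fin 3) ℂ)
    (hUR : U_R ∈ Matrix.unitaryGroup (Fin 3) ℂ)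
    (hy0 : 0 ≤ y 0) (h01 : y 0 ≤ y 1) (h12 : y 1 ≤ y 2)
    (hgap : 2 * (y 1)^2 < (y 2)^2)
    (hSVD : Y = U_L * Matrix.diagonal (fun i => (y i : ℂ)) * U_Rᴴ)
    (hα : ∀ j, ∑ k, ‖Y j k‖^2 ≤ ∑ k, ‖Y α k‖^2) :
    ((y 2)^2 - 2 * (y 1)^2) / (3 * ((y 2)^2 - (y 1)^2)) ≤ ‖U_L α 2‖^2 ∧
    ((y 2)^2 - 2 * (y 1)^2) / (3 * ((y 2)^2 - (y 1)^2))
      = 1 / ((2 * (y 2)^2 - (y 1)^2) / ((y 2)^2 - 2 * (y 1)^2) + 1) := by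
  have hURu : U_Rᴴ * U_R = 1 := by
    have := mem_unitaryGroup_iff'.mp hUR
    simpa [Matrix.star_eq_conjTranspose] using this
  have hULu : U_L * U_Lᴴ = 1 := by
    have := mem_unitaryGroup_iff.mp hUL
    simpa [Matrix.star_eq_conjTranspose] using this
  have hULu' : U_Lᴴ * U_L = 1 := by
    have := mem_unitaryGroup_iff'.mp hUL
    simpa [Matrix.star_eq_conjTranspose] using this
  have hD : (Matrix.diagonal fun i => ((y i : ℂ)))ᴴ = Matrix.diagonal fun i => ((y i : ℂ)) := by
    rw [diagonal_conjTranspose]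
    congr 1
    funext i
    simp [Pi.star_def]
  have hYY : Y * Yᴴ = U_L * Matrix.diagonal (fun i => (((y i)^2 : ℝ) : ℂ)) * U_Lᴴ := by
    subst hSVD
    rw [conjTranspose_mul, conjTranspose_mul, conjTranspose_conjTranspose, hD]
    simp only [Matrix.mul_assoc]
    rw [← Matrix.mul_assoc U_Rᴴ U_R, hURu, Matrix.one_mul,
      ← Matrix.mul_assoc (Matrix.diagonal _) (Matrix.diagonal _), diagonal_mul_diagonal]
    congr 2
    funext i
    push_cast
    ring
  -- row sums
  have hrow : ∀ j, ∑ k, ‖Y j k‖^2 = ∑ i, (y i)^2 * ‖U_L j i‖^2 := by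
    intro j
    have h1 : (Y * Yᴴ) j j = ((∑ k, ‖Y j k‖^2 : ℝ) : ℂ) := by
      simp only [mul_apply, conjTranspose_apply]
      push_cast
      congr 1
      funext k
      exact_mod_cast mul_star_eq_norm_sq (Y j k)
    have h2 : (U_L * Matrix.diagonal (fun i => (((y i)^2 : ℝ) : ℂ)) * U_Lᴴ) j j
        = ((∑ i, (y i)^2 * ‖U_L j i‖^2 : ℝ) : ℂ) := by
      rw [mul_apply]
      simp only [Matrix.mul_diagonal, conjTranspose_apply]
      push_cast
      congr 1
      funext i
      rw [mul_comm (U_L j i), mul_assoc, mul_star_eq_norm_sq]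
      push_cast
      ring
    have := h1.symm.trans (hYY ▸ h2)
    exact_mod_cast this
  -- row of U_L has unit norm
  have hrowU : ∑ i, ‖U_L α i‖^2 = 1 := by
    have h1 : (U_L * U_Lᴴ) α α = ((∑ i, ‖U_L α i‖^2 : ℝ) : ℂ) := by
      simp only [mul_apply, conjTranspose_apply]
      push_cast
      congr 1
      funext i
      exact_mod_cast mul_star_eq_norm_sq (U_L α i)
    rw [hULu, Matrix.one_apply_eq] at h1
    exact_mod_cast h1.symm
  -- columns of U_L have unit norm
  have hcolU : ∀ i, ∑ j, ‖U_L j i‖^2 = 1 := by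
    intro i
    have h1 : (U_Lᴴ * U_L) i i = ((∑ j, ‖U_L j i‖^2 : ℝ) : ℂ) := by
      simp only [mul_apply, conjTranspose_apply]
      push_cast
      congr 1
      funext j
      exact_mod_cast star_mul_eq_norm_sq (U_L j i)
    rw [hULu', Matrix.one_apply_eq] at h1
    exact_mod_cast h1.symm
  -- total sum of row norms
  have htot : ∑ j, ∑ k, ‖Y j k‖^2 = (y 0)^2 + (y 1)^2 + (y 2)^2 := by
    have h : ∑ j, ∑ k, ‖Y j k‖^2 = ∑ i, (y i)^2 * ∑ j, ‖U_L j i‖^2 := by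
      simp only [hrow, Finset.mul_sum]
      rw [Finset.sum_comm]
    rw [h]
    simp only [hcolU, mul_one]
    rw [Fin.sum_univ_three]
  have h3 : (y 0)^2 + (y 1)^2 + (y 2)^2 ≤ 3 * ∑ k, ‖Y α k‖^2 := by
    rw [← htot, Fin.sum_univ_three]
    linarith [hα 0, hα 1, hα 2]
  have hrα : ∑ k, ‖Y α k‖^2
      = (y 0)^2 * ‖U_L α 0‖^2 + (y 1)^2 * ‖U_L α 1‖^2 + (y 2)^2 * ‖U_L α 2‖^2 := by
    rw [hrow, Fin.sum_univ_three]
  have habc : ‖U_L α 0‖^2 + ‖U_L α 1‖^2 + ‖U_L α 2‖^2 = 1 := by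
    rw [← Fin.sum_univ_three (fun i => ‖U_L α i‖^2)]
    exact hrowU
  have ha0 : 0 ≤ ‖U_L α 0‖^2 := sq_nonneg _
  have hb0 : 0 ≤ ‖U_L α 1‖^2 := sq_nonneg _
  have hy01 : (y 0)^2 ≤ (y 1)^2 := by nlinarith
  have hy02 : 0 ≤ (y 0)^2 := sq_nonneg _
  have hy12 : (y 1)^2 < (y 2)^2 := by nlinarith [sq_nonneg (y 1)]
  constructor
  · rw [div_le_iff₀ (by nlinarith : (0:ℝ) < 3 * ((y 2)^2 - (y 1)^2))]
    rw [hrα] at h3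
    nlinarith [mul_nonneg ha0 (sub_nonneg.mpr hy01)]
  · have hne1 : (y 2)^2 - 2*(y 1)^2 ≠ 0 := by nlinarith
    have key : (2 * (y 2)^2 - (y 1)^2) / ((y 2)^2 - 2*(y 1)^2) + 1
        = (3 * ((y 2)^2 - (y 1)^2)) / ((y 2)^2 - 2*(y 1)^2) := by
      rw [div_add' _ _ _ hne1]
      congr 1
      ring
    rw [show (y 2)^2 - 2 * (y 1)^2 = (y 2)^2 - 2*(y 1)^2 from by ring] at *
    rw [key, one_div_div]
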